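/- For any assignment M of n messages to n servers, the macro-averaged recall R_M satisfies R_M ≤ sqrt(D_M), where D_M is the macro-averaged precision. Equivalently, R_M^2 ≤ D_M. -/

import Mathlib

/-- Macro-averaged recall squared is at most macro-averaged precision: `R_M² ≤ D_M`. -/
theorem stmt_1 {V : Type*} [Fintype V] [DecidableEq V] (M : V → V) :
    ((∑ v : V, (if M v = v then (1 : ℝ) else 0)) / (Fintype.card V : ℝ)) ^ 2 ≤
    (∑ v : V, (if M v = v then (1 : ℝ) else 0) /
        ((Finset.univ.filter (fun w => M w = v)).card : ℝ)) / (Fintype.card V : ℝ) := by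
  classical
  set F := Finset.univ.filter (fun v => M v = v) with hF
  set a : V → ℝ := fun v => ((Finset.univ.filter (fun w => M w = v)).card : ℝ) with ha
  have hsum1 : (∑ v : V, (if M v = v then (1:ℝ) else 0)) = F.card := by
    simp [hF, Finset.sum_boole]
  have hsum2 : (∑ v : V, (if M v = v then (1:ℝ) else 0) / a v) = ∑ v ∈ F, (a v)⁻¹ := by
    rw [hF, Finset.sum_filter]
    apply Finset.sum_congr rfl
    intro v _
    split <;> simp [one_div]
  rw [hsum1, hsum2]
  rcases Nat.eq_zero_or_pos (Fintype.card V) with h0 | hn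
  · simp [h0]
  have hnpos : (0:ℝ) < (Fintype.card V : ℝ) := by exact_mod_cast hn
  -- each fiber over a fixed point is nonempty
  have hapos : ∀ v ∈ F, 0 < a v := by
    intro v hv
    have : v ∈ Finset.univ.filter (fun w => M w = v) := by
      simp only [hF, Finset.mem_filter] at hv
      simp [hv.2]
    have h := Finset.card_pos.mpr ⟨v, this⟩
    simp only [ha]
    exact_mod_cast h
  -- fibers are disjoint, so the sum of their sizes is at most n
  have hfib : (∑ v ∈ F, a v) ≤ (Fintype.card V : ℝ) := by
    have : (∑ v ∈ F, (Finset.univ.filter (fun w => M w = v)).card) ≤ Fintype.card V := by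
      rw [← Finset.card_biUnion]
      · exact Finset.card_le_univ _
      · intro x _ y _ hxy
        dsimp only [Function.onFun]
        rw [Finset.disjoint_left]
        intro w hw hw'
        simp only [Finset.mem_filter] at hw hw'
        exact hxy (hw.2 ▸ hw'.2.symm ▸ rfl)
    calc (∑ v ∈ F, a v) = ((∑ v ∈ F, (Finset.univ.filter (fun w => M w = v)).card : ℕ) : ℝ) := by
          push_cast [ha]; rfl
      _ ≤ (Fintype.card V : ℝ) := by exact_mod_cast this
  -- Cauchy-Schwarz: |F|² ≤ (∑ a)(∑ a⁻¹)
  have hCS : ((F.card : ℝ)) ^ 2 ≤ (∑ v ∈ F, a v) * (∑ v ∈ F, (a v)⁻¹) := by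
    have := Finset.sum_mul_sq_le_sq_mul_sq F (fun v => Real.sqrt (a v))
      (fun v => (Real.sqrt (a v))⁻¹)
    have h1 : (∑ v ∈ F, Real.sqrt (a v) * (Real.sqrt (a v))⁻¹) = (F.card : ℝ) := by
      rw [Finset.sum_congr rfl (fun v hv => ?_), Finset.sum_const, nsmul_eq_mul, mul_one]
      have := hapos v hv
      rw [mul_inv_cancel₀ (by positivity)]
    have h2 : (∑ v ∈ F, Real.sqrt (a v) ^ 2) = ∑ v ∈ F, a v := by
      apply Finset.sum_congr rfl
      intro v hv
      exact Real.sq_sqrt (hapos v hv).le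
    have h3 : (∑ v ∈ F, ((Real.sqrt (a v))⁻¹) ^ 2) = ∑ v ∈ F, (a v)⁻¹ := by
      apply Finset.sum_congr rfl
      intro v hv
      rw [inv_pow, Real.sq_sqrt (hapos v hv).le]
    rw [h1, h2, h3] at this
    exact this
  have hSnonneg : 0 ≤ ∑ v ∈ F, (a v)⁻¹ :=
    Finset.sum_nonneg fun v hv => (inv_pos.mpr (hapos v hv)).le
  rw [div_pow, div_le_div_iff₀ (by positivity) hnpos]
  have : ((F.card : ℝ)) ^ 2 ≤ (Fintype.card V : ℝ) * (∑ v ∈ F, (a v)⁻¹) :=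
    hCS.trans (mul_le_mul_of_nonneg_right hfib hSnonneg)
  nlinarith [sq_nonneg ((Fintype.card V : ℝ))]
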